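/- Let X be a separable metric space (with its Borel σ-algebra) and Y a metric space. Let λ₁ ≥ 1, λ₂ ≥ 1, c₁ > 0, c₂ ≥ 0 and let f : X → Y satisfy (1/λ₂)(dist(x,x') − c₂) ≤ dist(f x, f x') ≤ λ₁·dist(x,x') + c₁ for all x, x' ∈ X. Then there exists a Borel-measurable map g : X → Y such that dist(f x, g x) ≤ 2c₁ for all x ∈ X, and for all x, x' ∈ X: (1/λ₂)(dist(x,x') − (c₂ + 2c₁/λ₁)) ≤ dist(g x, g x') ≤ λ₁·dist(x,x') + 3c₁. -/

import Mathlib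

open Metric

theorem stmt_7
    {X Y : Type*} [MetricSpace X] [TopologicalSpace.SeparableSpace X]
    [MeasurableSpace X] [BorelSpace X]
    [MetricSpace Y] [MeasurableSpace Y] [BorelSpace Y]
    (lam₁ lam₂ c₁ c₂ : ℝ) (hlam₁ : 1 ≤ lam₁) (hlam₂ : 1 ≤ lam₂)
    (hc₁ : 0 < c₁) (hc₂ : 0 ≤ c₂)
    (f : X → Y)
    (hqi : ∀ x x' : X,
      (dist x x' - c₂) / lam₂ ≤ dist (f x) (f x') ∧
      dist (f x) (f x') ≤ lam₁ * dist x x' + c₁) :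
    ∃ g : X → Y, Measurable g ∧ (∀ x, dist (f x) (g x) ≤ 2 * c₁) ∧
      ∀ x x' : X,
        (dist x x' - (c₂ + 2 * c₁ / lam₁)) / lam₂ ≤ dist (g x) (g x') ∧
        dist (g x) (g x') ≤ lam₁ * dist x x' + 3 * c₁ := by
  rcases isEmpty_or_nonempty X with hX | hX
  · exact ⟨f, measurable_of_empty f, fun x => (IsEmpty.false x).elim,
      fun x => (IsEmpty.false x).elim⟩
  have hlam₁0 : (0 : ℝ) < lam₁ := lt_of_lt_of_le one_pos hlam₁
  have hlam₂0 : (0 : ℝ) < lam₂ := lt_of_lt_of_le one_pos hlam₂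
  set r : ℝ := c₁ / lam₁ with hr_def
  have hr : 0 < r := div_pos hc₁ hlam₁0
  obtain ⟨u, hu⟩ := TopologicalSpace.exists_dense_seq X
  have hx : ∀ x : X, ∃ n, dist x (u n) < r := fun x =>
    (Metric.denseRange_iff.1 hu) x r hr
  set N : X → ℕ := fun x => Nat.find (hx x) with hN_def
  have hNd : ∀ x, dist x (u (N x)) < r := fun x => Nat.find_spec (hx x)
  have hNmeas : Measurable N := by
    apply measurable_to_nat
    intro y
    have : N ⁻¹' {N y} = ball (u (N y)) r ∩ ⋂ m < N y, (ball (u m) r)ᶜ := by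
      ext x
      simp only [Set.mem_preimage, Set.mem_singleton_iff, Set.mem_inter_iff,
        mem_ball, Set.mem_iInter, Set.mem_compl_iff, hN_def]
      rw [Nat.find_eq_iff]
    show MeasurableSet (N ⁻¹' {N y})
    rw [this]
    exact (measurableSet_ball).inter
      (MeasurableSet.iInter fun m => MeasurableSet.iInter fun _ =>
        measurableSet_ball.compl)
  refine ⟨fun x => f (u (N x)), ?_, ?_, ?_⟩
  · exact (measurable_from_nat (f := fun n => f (u n))).comp hNmeas
  · intro x
    have := (hqi x (u (N x))).2
    have h1 : lam₁ * dist x (u (N x)) + c₁ ≤ lam₁ * r + c₁ := by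
      nlinarith [hNd x]
    have h2 : lam₁ * r = c₁ := by
      rw [hr_def]; field_simp [hlam₁0.ne']
    linarith
  · intro x x'
    have hd : dist (u (N x)) (u (N x')) ≤ dist x x' + 2 * r := by
      have := dist_triangle (u (N x)) x (u (N x'))
      have := dist_triangle x x' (u (N x'))
      have h1 := hNd x
      have h2 := hNd x'
      rw [dist_comm (u (N x)) x] at *
      linarith
    have hd' : dist x x' - 2 * r ≤ dist (u (N x)) (u (N x')) := by
      have := dist_triangle x (u (N x)) x'
      have := dist_triangle (u (N x)) (u (N x')) x'
      have h1 := hNd x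
      have h2 := hNd x'
      rw [dist_comm (u (N x')) x'] at *
      linarith
    have hlow := (hqi (u (N x)) (u (N x'))).1
    have hhigh := (hqi (u (N x)) (u (N x'))).2
    have h2 : lam₁ * r = c₁ := by rw [hr_def]; field_simp [hlam₁0.ne']
    constructor
    · have heq : 2 * c₁ / lam₁ = 2 * r := by rw [hr_def]; ring
      have hmono : (dist x x' - (c₂ + 2 * c₁ / lam₁)) / lam₂ ≤
          (dist (u (N x)) (u (N x')) - c₂) / lam₂ := by
        apply div_le_div_of_nonneg_right ?_ hlam₂0.le
        linarith
      linarith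
    · nlinarith
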